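/- Let D be a division ring with center F, and suppose a ∈ D is algebraic and inseparable over F. Then there exists b ∈ D such that ab − ba = 1. -/
import Mathlib

open Polynomial Finset

section Helpers

variable {D : Type*} [DivisionRing D]

/-- Artin–Whaples type lemma: if `∑ bᵢ x cᵢ = 0` for all `x`, with the `bᵢ`
linearly independent over the center, then all `cᵢ = 0`. -/
private lemma aw_aux {ι : Type*} [DecidableEq ι] (b : ι → D) (s : Finset ι)
    (hb : ∀ f : ι → Subring.center D, ∑ i ∈ s, (f i : D) * b i = 0 → ∀ i ∈ s, f i = 0) :
    ∀ t : Finset ι, t ⊆ s → ∀ c : ι → D, (∀ x : D, ∑ i ∈ t, b i * x * c i = 0) →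
      ∀ i ∈ t, c i = 0 := by
  intro t
  induction t using Finset.strongInduction with
  | _ t IH =>
    intro hts c hc i hi
    by_contra hci
    set c' : ι → D := fun j => c j * (c i)⁻¹ with hc'def
    have hc'1 : c' i = 1 := mul_inv_cancel₀ hci
    have h1 : ∀ x : D, ∑ j ∈ t, b j * x * c' j = 0 := by
      intro x
      have := congrArg (· * (c i)⁻¹) (hc x)
      simpa [Finset.sum_mul, mul_assoc, hc'def] using this
    have h2 : ∀ y x : D, ∑ j ∈ t.erase i, b j * x * (c' j * y - y * c' j) = 0 := by
      intro y x
      have e1 := h1 (x * y)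
      have e2 := congrArg (· * y) (h1 x)
      simp only [Finset.sum_mul, zero_mul] at e2
      have e3 : ∑ j ∈ t, b j * x * (c' j * y - y * c' j) = 0 := by
        calc ∑ j ∈ t, b j * x * (c' j * y - y * c' j)
            = ∑ j ∈ t, (b j * x * c' j * y - b j * (x * y) * c' j) := by
              apply Finset.sum_congr rfl; intro j _; noncomm_ring
          _ = ∑ j ∈ t, b j * x * c' j * y - ∑ j ∈ t, b j * (x * y) * c' j := by
              rw [Finset.sum_sub_distrib]
          _ = 0 := by rw [e1, e2, sub_zero]
      rw [← Finset.add_sum_erase t _ hi] at e3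
      simpa [hc'1] using e3
    have hcen : ∀ j ∈ t, c' j ∈ Subring.center D := by
      intro j hj
      by_cases hji : j = i
      · rw [hji, hc'1]; exact Subring.one_mem _
      · rw [Subring.mem_center_iff]
        intro y
        have := IH (t.erase i) (Finset.erase_ssubset hi) ((Finset.erase_subset _ _).trans hts)
          (fun j => c' j * y - y * c' j) (h2 y) j (Finset.mem_erase.mpr ⟨hji, hj⟩)
        rw [sub_eq_zero] at this
        exact this.symm
    classical
    set f : ι → Subring.center D := fun j => if hj : j ∈ t then ⟨c' j, hcen j hj⟩ else 0 with hf
    have hsum : ∑ j ∈ s, (f j : D) * b j = 0 := by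
      rw [← Finset.sum_subset hts (by intro j _ hj; simp [hf, hj])]
      calc ∑ j ∈ t, (f j : D) * b j = ∑ j ∈ t, b j * 1 * c' j := by
            apply Finset.sum_congr rfl; intro j hj
            have : (f j : D) = c' j := by simp [hf, hj]
            rw [this, mul_one]
            exact ((Subring.mem_center_iff.mp (hcen j hj)) (b j)).symm ▸ rfl
        _ = 0 := h1 1
    have := hb f hsum i (hts hi)
    rw [hf] at this
    simp only [hi, dif_pos] at this
    have : c' i = 0 := congrArg Subtype.val this
    rw [hc'1] at this
    exact one_ne_zero this

/-- Distinct powers of `a` below the degree of the minimal polynomial are linearly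
independent over the center. -/
private lemma pow_indep (a : D) (hint : IsIntegral (Subring.center D) a)
    {ι : Type*} (s : Finset ι) (e : ι → ℕ)
    (hinj : ∀ i ∈ s, ∀ j ∈ s, e i = e j → i = j)
    (hlt : ∀ i ∈ s, e i < (minpoly (Subring.center D) a).natDegree)
    (f : ι → Subring.center D) (hsum : ∑ i ∈ s, (f i : D) * a ^ e i = 0) :
    ∀ i ∈ s, f i = 0 := by
  classical
  have hm0 : minpoly (Subring.center D) a ≠ 0 := minpoly.ne_zero hint
  set P : (Subring.center D)[X] := ∑ i ∈ s, C (f i) * X ^ e i with hP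
  have hPa : aeval a P = 0 := by
    rw [hP, map_sum, ← hsum]
    apply Finset.sum_congr rfl
    intro i _
    rw [map_mul, aeval_C, map_pow, aeval_X]
    rfl
  have hP0 : P = 0 := by
    by_contra hne
    have hge := minpoly.degree_le_of_ne_zero (Subring.center D) a hne hPa
    have hlt' : P.degree < (minpoly (Subring.center D) a).degree := by
      have h1 : P.degree ≤ s.sup fun i => ((C (f i) * X ^ e i).degree) := degree_sum_le _ _
      have h2 : (s.sup fun i => ((C (f i) * X ^ e i).degree)) <
          (minpoly (Subring.center D) a).degree := by
        rw [Finset.sup_lt_iff]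
        · intro i hi
          calc (C (f i) * X ^ e i).degree ≤ (e i : WithBot ℕ) := degree_C_mul_X_pow_le _ _
            _ < (((minpoly (Subring.center D) a).natDegree : ℕ) : WithBot ℕ) := by
                exact_mod_cast hlt i hi
            _ ≤ (minpoly (Subring.center D) a).degree := by
                rw [degree_eq_natDegree hm0]
        · rw [degree_eq_natDegree hm0]
          exact bot_lt_iff_ne_bot.mpr WithBot.coe_ne_bot
      exact lt_of_le_of_lt h1 h2
    exact absurd hge (not_le_of_gt hlt')
  intro i hi
  have hco : P.coeff (e i) = f i := by
    rw [hP, finset_sum_coeff, Finset.sum_eq_single_of_mem i hi]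
    · rw [coeff_C_mul, coeff_X_pow, if_pos rfl, mul_one]
    · intro j hj hji
      rw [coeff_C_mul, coeff_X_pow, if_neg (fun h => hji (hinj j hj i hi h.symm)), mul_zero]
  rw [hP0] at hco
  simpa using hco.symm

end Helpers

/-- Let `D` be a division ring with center `F`. If `a ∈ D` is algebraic over `F` with
inseparable minimal polynomial, then there exists `b ∈ D` with `a * b - b * a = 1`. -/
theorem stmt14 {D : Type*} [DivisionRing D] (a : D)
    (hint : IsIntegral (Subring.center D) a)
    (hinsep : ¬(minpoly (Subring.center D) a).Separable) :
    ∃ b : D, a * b - b * a = 1 := by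
  classical
  have hirr := minpoly.irreducible hint
  obtain ⟨p, hchar⟩ := CharP.exists (Subring.center D)
  haveI := hchar
  rcases CharP.char_is_prime_or_zero (Subring.center D) p with hprime | hp0
  swap
  · subst hp0
    haveI := CharP.charP_to_charZero (Subring.center D)
    exact absurd hirr.separable hinsep
  haveI : Fact p.Prime := ⟨hprime⟩
  haveI : CharP D p := charP_of_injective_ringHom
    (algebraMap (Subring.center D) D).injective p
  haveI : ExpChar D p := ExpChar.prime hprime
  rcases Polynomial.separable_or p hirr with hsep | ⟨-, g, hgirr, hgm⟩
  · exact absurd hsep hinsep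
  -- Main case: minpoly = expand p g
  by_cases hA : ∃ x : D, a * x - x * a ≠ 0 ∧ a * (a * x - x * a) = (a * x - x * a) * a
  · -- Case A: direct construction
    obtain ⟨x, hy0, hcomm⟩ := hA
    refine ⟨x * (a * x - x * a)⁻¹, ?_⟩
    have hcomm' : Commute a (a * x - x * a)⁻¹ := (Commute.inv_right₀ hcomm)
    calc a * (x * (a * x - x * a)⁻¹) - x * (a * x - x * a)⁻¹ * a
        = a * x * (a * x - x * a)⁻¹ - x * ((a * x - x * a)⁻¹ * a) := by noncomm_ring
      _ = a * x * (a * x - x * a)⁻¹ - x * (a * (a * x - x * a)⁻¹) := by rw [← hcomm'.eq]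
      _ = (a * x - x * a) * (a * x - x * a)⁻¹ := by noncomm_ring
      _ = 1 := mul_inv_cancel₀ hy0
  · -- Case B: derive a contradiction
    exfalso
    push_neg at hA
    have CB : ∀ z : D, a * (a * z - z * a) = (a * z - z * a) * a → a * z - z * a = 0 := by
      intro z hz
      by_contra h0
      exact hA z h0 hz
    -- the inner derivation as a linear map
    set δ : Module.End (Subring.center D) D :=
      LinearMap.mulLeft (Subring.center D) a - LinearMap.mulRight (Subring.center D) a with hδ
    have hδapp : ∀ z : D, δ z = a * z - z * a := by
      intro z
      simp [hδ, LinearMap.sub_apply, LinearMap.mulLeft_apply, LinearMap.mulRight_apply]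
    have hδp : ∀ z : D, (δ ^ p) z = a ^ p * z - z * a ^ p := by
      intro z
      rw [hδ, sub_pow_expChar_of_commute _ (LinearMap.commute_mulLeft_right a a),
        LinearMap.pow_mulLeft, LinearMap.pow_mulRight]
      simp [LinearMap.sub_apply, LinearMap.mulLeft_apply, LinearMap.mulRight_apply]
    have H : ∀ n : ℕ, ∀ w : D, (δ ^ (n + 1)) w = 0 → a * w = w * a := by
      intro n
      induction n with
      | zero =>
        intro w hw
        rw [pow_one, hδapp, sub_eq_zero] at hw
        exact hw
      | succ n IH =>
        intro w hw
        have h1 : (δ ^ (n + 1)) (δ w) = 0 := by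
          rw [← Module.End.mul_apply, ← pow_succ]
          exact hw
        have h2 := IH (δ w) h1
        rw [hδapp] at h2
        have := CB w h2
        rw [sub_eq_zero] at this
        exact this
    have hchain : ∀ z : D, a ^ p * z = z * a ^ p → a * z = z * a := by
      intro z hz
      refine H (p - 1) z ?_
      rw [Nat.sub_add_cancel hprime.one_le, hδp, hz, sub_self]
    -- Setup for the Artin–Whaples argument
    set u : D := a ^ p with hu
    set N : ℕ := g.natDegree with hN
    have hmdeg : (minpoly (Subring.center D) a).natDegree = N * p := by
      rw [← hgm, natDegree_expand]
    have hN1 : 1 ≤ N := by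
      have := minpoly.natDegree_pos hint
      rw [hmdeg] at this
      by_contra h
      push_neg at h
      interval_cases N
      simp at this
    have hgmonic : g.Monic := by
      have := minpoly.monic hint
      rw [← hgm] at this
      rwa [Polynomial.Monic, ← leadingCoeff_expand hprime.pos]
    set gc : ℕ → D := fun k => ((g.coeff k : Subring.center D) : D) with hgc
    have hgc_cen : ∀ k, gc k ∈ Subring.center D := fun k => (g.coeff k).2
    have hgc_comm : ∀ k (z : D), gc k * z = z * gc k := fun k z =>
      (Subring.mem_center_iff.mp (hgc_cen k) z).symm
    have hgu : ∑ k ∈ Finset.range (N + 1), gc k * u ^ k = 0 := by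
      have h1 : aeval u g = 0 := by
        rw [hu, ← expand_aeval p g a, hgm, minpoly.aeval]
      rw [aeval_eq_sum_range] at h1
      rw [← h1]
      apply Finset.sum_congr rfl
      intro k _
      rw [Algebra.smul_def]
      rfl
    set cc : ℕ → D := fun i => ∑ k ∈ Finset.Ico (i + 1) (N + 1), gc k * u ^ (k - 1 - i) with hcc
    set E : D → D := fun x => ∑ i ∈ Finset.range N, u ^ i * x * cc i with hE
    -- E as a double sum
    have hE2 : ∀ x : D, E x = ∑ k ∈ Finset.range (N + 1), ∑ i ∈ Finset.range k,
        gc k * (u ^ i * x * u ^ (k - 1 - i)) := by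
      intro x
      have swap := Finset.sum_Ico_Ico_comm' 0 (N + 1)
        (fun i k => gc k * (u ^ i * x * u ^ (k - 1 - i)))
      rw [hE]
      simp only [← Finset.range_eq_Ico] at swap
      rw [← swap]
      rw [Finset.sum_range_succ]
      simp only [Finset.Ico_self, Finset.sum_empty, add_zero]
      apply Finset.sum_congr rfl
      intro i _
      rw [hcc, Finset.mul_sum]
      apply Finset.sum_congr rfl
      intro k _
      rw [hgc_comm k (u ^ (k - 1 - i)), hgc_comm k (u ^ i * x * u ^ (k - 1 - i))]
      noncomm_ring
    -- u commutes with E x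
    have hswap : ∀ k (z : D), u * (gc k * z) = gc k * (u * z) := by
      intro k z
      rw [← mul_assoc, ← hgc_comm k u, mul_assoc]
    have uE : ∀ x : D, u * E x = E x * u := by
      intro x
      rw [← sub_eq_zero]
      have tele : ∀ k : ℕ,
          u * (∑ i ∈ Finset.range k, u ^ i * x * u ^ (k - 1 - i))
            - (∑ i ∈ Finset.range k, u ^ i * x * u ^ (k - 1 - i)) * u
          = u ^ k * x - x * u ^ k := by
        intro k
        rw [Finset.mul_sum, Finset.sum_mul, ← Finset.sum_sub_distrib]
        have step : ∀ i ∈ Finset.range k,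
            u * (u ^ i * x * u ^ (k - 1 - i)) - u ^ i * x * u ^ (k - 1 - i) * u
            = (fun j => u ^ j * x * u ^ (k - j)) (i + 1) - (fun j => u ^ j * x * u ^ (k - j)) i := by
          intro i hi
          rw [Finset.mem_range] at hi
          simp only []
          have e1 : k - 1 - i = k - (i + 1) := by omega
          have e2 : u ^ (k - 1 - i) * u = u ^ (k - i) := by
            rw [← pow_succ]
            congr 1
            omega
          rw [← e1, ← e2, pow_succ']
          noncomm_ring
        rw [Finset.sum_congr rfl step, Finset.sum_range_sub (fun j => u ^ j * x * u ^ (k - j))]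
        simp
      have key : u * E x - E x * u
          = ∑ k ∈ Finset.range (N + 1), gc k * (u ^ k * x - x * u ^ k) := by
        rw [hE2 x, Finset.mul_sum, Finset.sum_mul, ← Finset.sum_sub_distrib]
        apply Finset.sum_congr rfl
        intro k _
        rw [← Finset.mul_sum, hswap, mul_assoc (gc k), ← mul_sub, tele k]
      rw [key]
      have regroup : ∀ k ∈ Finset.range (N + 1), gc k * (u ^ k * x - x * u ^ k)
          = (gc k * u ^ k) * x - x * (gc k * u ^ k) := by
        intro k _
        rw [mul_sub, ← mul_assoc]
        congr 1
        rw [hgc_comm k (x * u ^ k), mul_assoc, ← hgc_comm k (u ^ k)]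
      rw [Finset.sum_congr rfl regroup, Finset.sum_sub_distrib, ← Finset.sum_mul, ← Finset.mul_sum,
        hgu]
      simp
    -- hence a commutes with E x
    have aE : ∀ x : D, a * E x = E x * a := fun x => hchain (E x) (uE x)
    -- Artin–Whaples setup
    set s : Finset (ℕ × ℕ) := Finset.range N ×ˢ Finset.range 2 with hs
    set e : ℕ × ℕ → ℕ := fun q => p * q.1 + q.2 with he
    set bb : ℕ × ℕ → D := fun q => a ^ e q with hbb
    set cf : ℕ × ℕ → D := fun q => if q.2 = 0 then -(cc q.1 * a) else cc q.1 with hcf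
    have hinj : ∀ i ∈ s, ∀ j ∈ s, e i = e j → i = j := by
      intro ⟨i, r⟩ hi ⟨j, r'⟩ hj hij
      rw [hs, Finset.mem_product, Finset.mem_range, Finset.mem_range] at hi hj
      simp only [he] at hij
      have h1 : (p * i + r) % p = r % p := Nat.mul_add_mod p i r
      have h2 : (p * j + r') % p = r' % p := Nat.mul_add_mod p j r'
      have hr : r % p = r := Nat.mod_eq_of_lt (lt_of_lt_of_le hi.2 hprime.two_le)
      have hr' : r' % p = r' := Nat.mod_eq_of_lt (lt_of_lt_of_le hj.2 hprime.two_le)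
      have : r = r' := by rw [← hr, ← h1, hij, h2, hr']
      subst this
      have : i = j := by
        have := Nat.add_right_cancel hij
        exact Nat.eq_of_mul_eq_mul_left hprime.pos this
      subst this
      rfl
    have hlt : ∀ q ∈ s, e q < (minpoly (Subring.center D) a).natDegree := by
      intro ⟨i, r⟩ hq
      rw [hs, Finset.mem_product, Finset.mem_range, Finset.mem_range] at hq
      rw [hmdeg, he]
      have : p * i + r < p * (i + 1) := by
        rw [Nat.mul_succ]
        have := hprime.two_le
        omega
      calc p * i + r < p * (i + 1) := this
        _ ≤ p * N := Nat.mul_le_mul_left p hq.1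
        _ = N * p := Nat.mul_comm p N
    have hsum : ∀ x : D, ∑ q ∈ s, bb q * x * cf q = 0 := by
      intro x
      rw [hs, Finset.sum_product]
      have inner : ∀ i ∈ Finset.range N, ∑ r ∈ Finset.range 2,
          bb (i, r) * x * cf (i, r)
          = a * (u ^ i * x * cc i) - (u ^ i * x * cc i) * a := by
        intro i _
        rw [Finset.sum_range_succ, Finset.sum_range_succ, Finset.sum_range_zero, zero_add]
        have t0 : cf (i, 0) = -(cc i * a) := by simp [hcf]
        have t1 : cf (i, 1) = cc i := by simp [hcf]
        have b0 : bb (i, 0) = u ^ i := by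
          simp only [hbb, he, add_zero]
          rw [pow_mul]
        have b1 : bb (i, 1) = a * u ^ i := by
          simp only [hbb, he]
          rw [pow_succ', pow_mul]
        rw [t0, t1, b0, b1]
        noncomm_ring
      rw [Finset.sum_congr rfl inner, Finset.sum_sub_distrib, ← Finset.mul_sum, ← Finset.sum_mul,
        sub_eq_zero]
      exact aE x
    have hAW := aw_aux bb s
      (fun f hf => pow_indep a hint s e hinj hlt f (by rwa [hbb] at hf))
      s subset_rfl cf hsum
    have hmem : ((N - 1 : ℕ), 1) ∈ s := by
      rw [hs, Finset.mem_product, Finset.mem_range, Finset.mem_range]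
      omega
    have hccN : cf ((N - 1 : ℕ), 1) = 0 := hAW _ hmem
    simp only [hcf] at hccN
    rw [if_neg (by norm_num : ¬((1:ℕ) = 0))] at hccN
    simp only [hcc] at hccN
    have hIco : Finset.Ico ((N - 1) + 1) (N + 1) = {N} := by
      have : (N - 1) + 1 = N := by omega
      rw [this, Nat.Ico_succ_singleton]
    rw [hIco, Finset.sum_singleton] at hccN
    have : N - 1 - (N - 1) = 0 := by omega
    rw [this, pow_zero, mul_one] at hccN
    have hgcN : gc N = 1 := by
      simp only [hgc]
      rw [show g.coeff N = 1 from hgmonic]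
      rfl
    rw [hgcN] at hccN
    exact one_ne_zero hccN
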